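/- Let z⁻ ∈ ℝ^m and y = Cx + v with v zero-mean, Cov(v) = R ≻ 0, v uncorrelated with x and z⁻. Write Γ_xx = E[xxᵀ], Γ_xz = E[x z⁻ᵀ], Γ_zz = E[z⁻ z⁻ᵀ] ≻ 0, and define P⁻ = Γ_xx − Γ_xz Γ_zz⁻¹ Γ_zx, θ⁻ = Γ_xz Γ_zz⁻¹. Then the linear MMSE estimator of x given the stacked vector col(z⁻, y) is [(I − KC)θ⁻, K]·col(z⁻, y) with K = P⁻Cᵀ(CP⁻Cᵀ + R)⁻¹, and its residual covariance is (I − KC)P⁻. -/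

import Mathlib

open Matrix MeasureTheory

section Helpers

variable {Ω : Type*} [MeasureSpace Ω] {μ : Measure Ω}

lemma l2_mul_integrable {f g : Ω → ℝ} (hf : MemLp f 2 μ) (hg : MemLp g 2 μ) :
    Integrable (fun ω => f ω * g ω) μ := by
  have h : MemLp (f • g) 1 μ := hg.smul hf (hpqr := ⟨by rw [inv_one, ENNReal.inv_two_add_inv_two]⟩)
  rw [memLp_one_iff_integrable] at h
  exact h

lemma cov_entry {ι κ₁ κ₂ : Type*} [Fintype ι]
    (F : Ω → ι → ℝ) (hF : ∀ t, MemLp (fun ω => F ω t) 2 μ)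
    (S : Matrix ι ι ℝ) (hS : ∀ s t, S s t = ∫ ω, F ω s * F ω t ∂μ)
    (T : Matrix κ₁ ι ℝ) (U : Matrix κ₂ ι ℝ) (i : κ₁) (j : κ₂) :
    ∫ ω, (T *ᵥ F ω) i * (U *ᵥ F ω) j ∂μ = (T * S * Uᵀ) i j := by
  have hint : ∀ s t : ι, Integrable (fun ω => T i s * U j t * (F ω s * F ω t)) μ :=
    fun s t => (l2_mul_integrable (hF s) (hF t)).const_mul _
  have h1 : (fun ω => (T *ᵥ F ω) i * (U *ᵥ F ω) j)
      = fun ω => ∑ s, ∑ t, T i s * U j t * (F ω s * F ω t) := by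
    funext ω
    simp only [mulVec, dotProduct]
    rw [Finset.sum_mul_sum]
    exact Finset.sum_congr rfl fun s _ => Finset.sum_congr rfl fun t _ => by ring
  rw [h1, integral_finset_sum _ fun s _ => integrable_finset_sum _ fun t _ => hint s t]
  have h2 : ∀ s : ι, ∫ ω, ∑ t, T i s * U j t * (F ω s * F ω t) ∂μ
      = ∑ t, T i s * U j t * S s t := by
    intro s
    rw [integral_finset_sum _ fun t _ => hint s t]
    exact Finset.sum_congr rfl fun t _ => by rw [integral_const_mul, hS]
  rw [Finset.sum_congr rfl fun s _ => h2 s]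
  simp only [Matrix.mul_apply, transpose_apply, Finset.sum_mul]
  rw [Finset.sum_comm]
  exact Finset.sum_congr rfl fun t _ => Finset.sum_congr rfl fun s _ => by ring

lemma gram_posSemidef {ι : Type*} [Fintype ι]
    (F : Ω → ι → ℝ) (hF : ∀ t, MemLp (fun ω => F ω t) 2 μ)
    (S : Matrix ι ι ℝ) (hS : ∀ s t, S s t = ∫ ω, F ω s * F ω t ∂μ) :
    S.PosSemidef := by
  rw [Matrix.posSemidef_iff_dotProduct_mulVec]
  constructor
  · ext s t
    simp only [conjTranspose_apply, star_trivial]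
    rw [hS, hS]
    congr 1; funext ω; ring
  · intro a
    have h := cov_entry F hF S hS (Matrix.of fun (_ : Fin 1) t => a t)
      (Matrix.of fun (_ : Fin 1) t => a t) 0 0
    have h0 : 0 ≤ ∫ ω, ((Matrix.of fun (_ : Fin 1) t => a t) *ᵥ F ω) 0 *
        ((Matrix.of fun (_ : Fin 1) t => a t) *ᵥ F ω) 0 ∂μ :=
      integral_nonneg fun ω => mul_self_nonneg _
    rw [h] at h0
    have he : star a ⬝ᵥ S *ᵥ a = ((Matrix.of fun (_ : Fin 1) t => a t) * S *
        (Matrix.of fun (_ : Fin 1) t => a t)ᵀ) 0 0 := by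
      simp only [Matrix.mul_apply, transpose_apply, dotProduct, mulVec, Pi.star_apply,
        star_trivial, of_apply, Finset.sum_mul]
      rw [Finset.sum_comm]
      exact Finset.sum_congr rfl fun s _ => by
        rw [Finset.mul_sum]
        exact Finset.sum_congr rfl fun t _ => by ring
    rw [he]
    exact h0

lemma Matrix.fromColumns_add' {R : Type*} [Add R] {m n₁ n₂ : Type*}
    (A₁ : Matrix m n₁ R) (A₂ : Matrix m n₂ R) (B₁ : Matrix m n₁ R) (B₂ : Matrix m n₂ R) :
    fromCols A₁ A₂ + fromCols B₁ B₂ = fromCols (A₁ + B₁) (A₂ + B₂) := by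
  ext _ (_ | _) <;> simp [fromCols]

lemma Matrix.fromColumns_sub' {R : Type*} [Sub R] {m n₁ n₂ : Type*}
    (A₁ : Matrix m n₁ R) (A₂ : Matrix m n₂ R) (B₁ : Matrix m n₁ R) (B₂ : Matrix m n₂ R) :
    fromCols A₁ A₂ - fromCols B₁ B₂ = fromCols (A₁ - B₁) (A₂ - B₂) := by
  ext _ (_ | _) <;> simp [fromCols]

lemma Matrix.fromRows_add' {R : Type*} [Add R] {m₁ m₂ n : Type*}
    (A₁ : Matrix m₁ n R) (A₂ : Matrix m₂ n R) (B₁ : Matrix m₁ n R) (B₂ : Matrix m₂ n R) :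
    fromRows A₁ A₂ + fromRows B₁ B₂ = fromRows (A₁ + B₁) (A₂ + B₂) := by
  ext (_ | _) _ <;> simp

end Helpers
theorem stmt10 {n m p : ℕ} {Ω : Type*} [MeasureSpace Ω] (μ : Measure Ω)
    [IsProbabilityMeasure μ]
    (x : Ω → Fin n → ℝ) (z : Ω → Fin m → ℝ) (v : Ω → Fin p → ℝ)
    (C : Matrix (Fin p) (Fin n) ℝ) (R : Matrix (Fin p) (Fin p) ℝ)
    (y : Ω → Fin p → ℝ) (hy : y = fun ω => C *ᵥ x ω + v ω)
    (hx2 : ∀ i, MemLp (fun ω => x ω i) 2 μ)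
    (hz2 : ∀ j, MemLp (fun ω => z ω j) 2 μ)
    (hv2 : ∀ i, MemLp (fun ω => v ω i) 2 μ)
    (hxm : ∀ i, ∫ ω, x ω i ∂μ = 0) (hzm : ∀ j, ∫ ω, z ω j ∂μ = 0)
    (hvm : ∀ i, ∫ ω, v ω i ∂μ = 0)
    (hR : ∀ i j, R i j = ∫ ω, v ω i * v ω j ∂μ) (hRPD : R.PosDef)
    (hvx : ∀ i j, ∫ ω, v ω i * x ω j ∂μ = 0)
    (hvz : ∀ i j, ∫ ω, v ω i * z ω j ∂μ = 0)
    (Γxx : Matrix (Fin n) (Fin n) ℝ) (hΓxx : ∀ i j, Γxx i j = ∫ ω, x ω i * x ω j ∂μ)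
    (Γxz : Matrix (Fin n) (Fin m) ℝ) (hΓxz : ∀ i j, Γxz i j = ∫ ω, x ω i * z ω j ∂μ)
    (Γzz : Matrix (Fin m) (Fin m) ℝ) (hΓzz : ∀ i j, Γzz i j = ∫ ω, z ω i * z ω j ∂μ)
    (hΓzzPD : Γzz.PosDef)
    (Pm : Matrix (Fin n) (Fin n) ℝ) (hPm : Pm = Γxx - Γxz * Γzz⁻¹ * Γxzᵀ)
    (θm : Matrix (Fin n) (Fin m) ℝ) (hθm : θm = Γxz * Γzz⁻¹)
    (K : Matrix (Fin n) (Fin p) ℝ) (hK : K = Pm * Cᵀ * (C * Pm * Cᵀ + R)⁻¹)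
    (Γxw : Matrix (Fin n) (Fin m ⊕ Fin p) ℝ)
    (hΓxw : ∀ i j, Γxw i j = ∫ ω, x ω i * (Sum.elim (z ω) (y ω)) j ∂μ)
    (Γww : Matrix (Fin m ⊕ Fin p) (Fin m ⊕ Fin p) ℝ)
    (hΓww : ∀ i j, Γww i j = ∫ ω, (Sum.elim (z ω) (y ω)) i * (Sum.elim (z ω) (y ω)) j ∂μ) :
    Γxw * Γww⁻¹ = Matrix.fromCols ((1 - K * C) * θm) K ∧
    (∀ i j, ∫ ω, (x ω i - ((Γxw * Γww⁻¹) *ᵥ Sum.elim (z ω) (y ω)) i)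
        * (x ω j - ((Γxw * Γww⁻¹) *ᵥ Sum.elim (z ω) (y ω)) j) ∂μ
      = ((1 - K * C) * Pm : Matrix (Fin n) (Fin n) ℝ) i j) := by
  classical
  set F : Ω → Fin n ⊕ (Fin m ⊕ Fin p) → ℝ :=
    fun ω => Sum.elim (x ω) (Sum.elim (z ω) (v ω)) with hFdef
  have hF : ∀ t, MemLp (fun ω => F ω t) 2 μ := by
    rintro (i | i | i)
    · exact hx2 i
    · exact hz2 i
    · exact hv2 i
  set G : Matrix (Fin n) (Fin m ⊕ Fin p) ℝ := fromCols Γxz 0 with hGdef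
  set Gt : Matrix (Fin m ⊕ Fin p) (Fin n) ℝ := fromRows Γxzᵀ 0 with hGtdef
  set H : Matrix (Fin m ⊕ Fin p) (Fin m ⊕ Fin p) ℝ := fromBlocks Γzz 0 0 R with hHdef
  set Sg : Matrix (Fin n ⊕ (Fin m ⊕ Fin p)) (Fin n ⊕ (Fin m ⊕ Fin p)) ℝ :=
    fromBlocks Γxx G Gt H with hSgdef
  set W1 : Matrix (Fin m ⊕ Fin p) (Fin n) ℝ := fromRows 0 C with hW1def
  set W : Matrix (Fin m ⊕ Fin p) (Fin n ⊕ (Fin m ⊕ Fin p)) ℝ := fromCols W1 1 with hWdef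
  set X : Matrix (Fin n) (Fin n ⊕ (Fin m ⊕ Fin p)) ℝ := fromCols 1 0 with hXdef
  set B1 : Matrix (Fin n) (Fin n) ℝ := 1 - K * C with hB1def
  set A : Matrix (Fin n) (Fin m) ℝ := B1 * θm with hAdef
  set M0 : Matrix (Fin n) (Fin m ⊕ Fin p) ℝ := fromCols A K with hM0def
  set T : Matrix (Fin n) (Fin n ⊕ (Fin m ⊕ Fin p)) ℝ :=
    fromCols B1 (fromCols (-A) (-K)) with hTdef
  set Sc : Matrix (Fin p) (Fin p) ℝ := C * Pm * Cᵀ + R with hScdef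
  -- basic invertibility facts
  have hdetzz : IsUnit Γzz.det := hΓzzPD.det_pos.ne'.isUnit
  have hθΓ : θm * Γzz = Γxz := by
    rw [hθm]; exact Matrix.nonsing_inv_mul_cancel_right Γzz Γxz hdetzz
  have hθxzT : θm * Γxzᵀ = Γxx - Pm := by
    rw [hPm, hθm]; exact (sub_sub_cancel _ _).symm
  -- the covariance matrix of the stacked vector F
  have hSig : ∀ s t, Sg s t = ∫ ω, F ω s * F ω t ∂μ := by
    rintro (i | i | i) (j | j | j) <;>
      simp only [hSgdef, hGdef, hGtdef, hHdef, hFdef, fromBlocks_apply₁₁, fromBlocks_apply₁₂,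
        fromBlocks_apply₂₁, fromBlocks_apply₂₂, fromCols_apply_inl, fromCols_apply_inr,
        fromRows_apply_inl, fromRows_apply_inr, Sum.elim_inl, Sum.elim_inr, transpose_apply,
        Matrix.zero_apply]
    · exact hΓxx i j
    · exact hΓxz i j
    · rw [← hvx j i]; congr 1; funext ω; ring
    · rw [hΓxz j i]; congr 1; funext ω; ring
    · exact hΓzz i j
    · rw [← hvz j i]; congr 1; funext ω; ring
    · exact (hvx i j).symm
    · exact (hvz i j).symm
    · exact hR i j
  have hSgPSD : Sg.PosSemidef := gram_posSemidef F hF Sg hSig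
  -- identification of the observed vectors as linear images of F
  have hw : ∀ ω, Sum.elim (z ω) (y ω) = W *ᵥ F ω := by
    intro ω
    simp only [hWdef, hFdef, hW1def, fromCols_mulVec_sumElim, fromRows_mulVec,
      Matrix.one_mulVec, Matrix.zero_mulVec, hy]
    funext s; rcases s with i | i <;> simp
  have hxF : ∀ ω, x ω = X *ᵥ F ω := by
    intro ω
    simp only [hXdef, hFdef, fromCols_mulVec_sumElim, Matrix.one_mulVec, Matrix.zero_mulVec,
      add_zero]
  have hGww : Γww = W * Sg * Wᵀ := by
    ext s t
    rw [hΓww s t]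
    have he : (fun ω => Sum.elim (z ω) (y ω) s * Sum.elim (z ω) (y ω) t)
        = fun ω => (W *ᵥ F ω) s * (W *ᵥ F ω) t := by funext ω; rw [hw ω]
    rw [he]
    exact cov_entry F hF Sg hSig W W s t
  have hGxw : Γxw = X * Sg * Wᵀ := by
    ext s t
    rw [hΓxw s t]
    have he : (fun ω => x ω s * Sum.elim (z ω) (y ω) t)
        = fun ω => (X *ᵥ F ω) s * (W *ᵥ F ω) t := by funext ω; rw [hw ω, hxF ω]
    rw [he]
    exact cov_entry F hF Sg hSig X W s t
  -- Pm is positive semidefinite (it is the covariance of the prior residual)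
  have hPmEq : Pm = (fromCols 1 (fromCols (-θm) 0) :
      Matrix (Fin n) (Fin n ⊕ (Fin m ⊕ Fin p)) ℝ) * Sg *
      ((fromCols 1 (fromCols (-θm) 0) : Matrix (Fin n) (Fin n ⊕ (Fin m ⊕ Fin p)) ℝ))ᵀ := by
    rw [hSgdef, fromCols_mul_fromBlocks, hGtdef, hGdef, hHdef,
      fromCols_mul_fromRows, fromCols_mul_fromBlocks, Matrix.one_mul, Matrix.one_mul,
      transpose_fromCols, fromCols_mul_fromRows]
    rw [Matrix.neg_mul, Matrix.neg_mul, Matrix.neg_mul, hθxzT, hθΓ]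
    rw [Matrix.zero_mul, Matrix.mul_zero, Matrix.mul_zero, Matrix.zero_mul]
    have e1 : Γxx + (-(Γxx - Pm) + 0) = Pm := by abel
    have e2 : (fromCols Γxz 0 + fromCols (-Γxz + 0) (-0 + 0) :
        Matrix (Fin n) (Fin m ⊕ Fin p) ℝ) = 0 := by
      rw [Matrix.fromColumns_add']
      simp [Matrix.fromCols_zero]
    rw [Matrix.fromColumns_add'] at e2 ⊢
    rw [e2, Matrix.zero_mul, add_zero, Matrix.transpose_one, Matrix.mul_one, e1]
  have hPmPSD : Pm.PosSemidef := by
    rw [hPmEq]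
    have h := hSgPSD.mul_mul_conjTranspose_same
      (fromCols 1 (fromCols (-θm) 0) : Matrix (Fin n) (Fin n ⊕ (Fin m ⊕ Fin p)) ℝ)
    rwa [Matrix.conjTranspose_eq_transpose_of_trivial] at h
  have hScPD : Sc.PosDef := by
    rw [hScdef]
    have h1 := hPmPSD.mul_mul_conjTranspose_same C
    rw [Matrix.conjTranspose_eq_transpose_of_trivial] at h1
    exact Matrix.PosDef.posSemidef_add h1 hRPD
  have hdetSc : IsUnit Sc.det := hScPD.det_pos.ne'.isUnit
  have hKS : K * Sc = Pm * Cᵀ := by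
    rw [hK]; exact Matrix.nonsing_inv_mul_cancel_right Sc (Pm * Cᵀ) hdetSc
  have hB1PmC : B1 * Pm * Cᵀ = K * R := by
    rw [hB1def, Matrix.sub_mul, Matrix.sub_mul, Matrix.one_mul, ← hKS, hScdef, Matrix.mul_add]
    rw [← Matrix.mul_assoc, ← Matrix.mul_assoc]
    abel
  have hTSg : T * Sg = fromCols (B1 * Pm) (fromCols 0 (-(K * R))) := by
    have hAxz : A * Γxzᵀ = B1 * Γxx - B1 * Pm := by
      rw [hAdef, Matrix.mul_assoc, hθxzT, Matrix.mul_sub]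
    have hAzz : A * Γzz = B1 * Γxz := by rw [hAdef, Matrix.mul_assoc, hθΓ]
    rw [hTdef, hSgdef, fromCols_mul_fromBlocks, hGtdef, hHdef, hGdef,
      fromCols_mul_fromRows, fromCols_mul_fromBlocks, mul_fromCols,
      Matrix.fromColumns_add', Matrix.fromCols_ext_iff]
    refine ⟨?_, ?_⟩
    · rw [Matrix.neg_mul, hAxz, Matrix.mul_zero, add_zero]
      abel
    · rw [Matrix.fromCols_ext_iff]
      refine ⟨?_, ?_⟩
      · rw [Matrix.neg_mul, hAzz, Matrix.mul_zero, add_zero]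
        abel
      · simp only [Matrix.mul_zero, Matrix.neg_mul, Matrix.zero_mul, add_zero, zero_add]
  have hMW : M0 * W = fromCols (K * C) M0 := by
    rw [hM0def, hWdef, mul_fromCols, Matrix.mul_one, hW1def, fromCols_mul_fromRows,
      Matrix.mul_zero, zero_add]
  have hT2 : T = X - M0 * W := by
    rw [hMW, hXdef, hTdef, Matrix.fromColumns_sub', Matrix.fromCols_ext_iff]
    exact ⟨hB1def, by rw [zero_sub, hM0def, fromCols_neg]⟩
  have hTSgW : T * Sg * Wᵀ = 0 := by
    rw [hTSg, hWdef, transpose_fromCols, Matrix.transpose_one, hW1def,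
      transpose_fromRows, Matrix.transpose_zero, fromCols_mul_fromRows, mul_fromCols,
      Matrix.mul_zero, Matrix.mul_one, Matrix.fromColumns_add', hB1PmC]
    simp
  have hTSgT : T * Sg * Tᵀ = B1 * Pm := by
    rw [hTSg, hTdef, transpose_fromCols, fromCols_mul_fromRows, transpose_fromCols,
      fromCols_mul_fromRows, Matrix.zero_mul, zero_add, Matrix.transpose_neg,
      Matrix.neg_mul, Matrix.mul_neg, neg_neg]
    have hBt : B1ᵀ = 1 - Cᵀ * Kᵀ := by
      rw [hB1def, Matrix.transpose_sub, Matrix.transpose_one, Matrix.transpose_mul]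
    rw [hBt, Matrix.mul_sub, Matrix.mul_one, ← Matrix.mul_assoc, hB1PmC]
    abel
  have e1' : W1 * Γxx + Gt = fromRows Γxzᵀ (C * Γxx) := by
    rw [hW1def, hGtdef, fromRows_mul, Matrix.zero_mul, Matrix.fromRows_add', zero_add, add_zero]
  have e2' : W1 * G + H = fromCols (fromRows Γzz (C * Γxz)) (fromRows 0 R) := by
    rw [hW1def, hGdef, hHdef, mul_fromCols, Matrix.mul_zero,
      ← fromCols_fromRows_eq_fromBlocks, Matrix.fromColumns_add', fromRows_mul,
      Matrix.zero_mul, Matrix.fromRows_add', zero_add, add_zero, zero_add]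
  have hWSg : W * Sg = fromCols (fromRows Γxzᵀ (C * Γxx))
      (fromCols (fromRows Γzz (C * Γxz)) (fromRows 0 R)) := by
    rw [hWdef, hSgdef, fromCols_mul_fromBlocks, Matrix.one_mul, Matrix.one_mul, e1', e2']
  have hGwwB : Γww = fromBlocks Γzz (Γxzᵀ * Cᵀ) (C * Γxz) (C * Γxx * Cᵀ + R) := by
    rw [hGww, hWSg, hWdef, hW1def, transpose_fromCols, transpose_fromRows,
      Matrix.transpose_one, Matrix.transpose_zero, fromCols_mul_fromRows, mul_fromCols,
      Matrix.mul_zero, Matrix.mul_one, fromRows_mul, Matrix.fromColumns_add',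
      Matrix.fromRows_add', zero_add, add_zero, fromCols_fromRows_eq_fromBlocks]
  have hdetWW : IsUnit Γww.det := by
    haveI : Invertible Γzz := Γzz.invertibleOfIsUnitDet hdetzz
    rw [hGwwB, Matrix.det_fromBlocks₁₁]
    have hSchur : C * Γxx * Cᵀ + R - C * Γxz * ⅟Γzz * (Γxzᵀ * Cᵀ) = Sc := by
      rw [Matrix.invOf_eq_nonsing_inv, hScdef, hPm]
      simp only [Matrix.mul_sub, Matrix.sub_mul, ← Matrix.mul_assoc]
      abel
    rw [hSchur]
    exact hdetzz.mul hdetSc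
  have h1 : M0 * Γww = Γxw := by
    have h0 : (X - M0 * W) * Sg * Wᵀ = 0 := by rw [← hT2]; exact hTSgW
    rw [Matrix.sub_mul, Matrix.sub_mul, sub_eq_zero] at h0
    rw [hGww, hGxw, ← Matrix.mul_assoc, ← Matrix.mul_assoc]
    exact h0.symm
  have hfirst : Γxw * Γww⁻¹ = M0 := by
    rw [← h1]
    exact Matrix.mul_nonsing_inv_cancel_right Γww M0 hdetWW
  refine ⟨hfirst, ?_⟩
  intro i j
  rw [hfirst]
  have hres : (fun ω => (x ω i - (M0 *ᵥ Sum.elim (z ω) (y ω)) i)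
      * (x ω j - (M0 *ᵥ Sum.elim (z ω) (y ω)) j))
      = fun ω => (T *ᵥ F ω) i * (T *ᵥ F ω) j := by
    funext ω
    rw [hw ω, hxF ω, Matrix.mulVec_mulVec, hT2, Matrix.sub_mulVec]
    simp [Pi.sub_apply]
  rw [hres, cov_entry F hF Sg hSig T T i j, hTSgT]
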